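/- Let Ω ⊆ ℝ³ be open and ν₁, ν₂ : Ω → ℝ be C¹ functions with ν₁² + ν₂² = 1 on Ω; set H = Xν₁ + Yν₂. Let γ = (x,y,t) : I → Ω be a C¹ curve with ẋ = −ν₂∘γ, ẏ = ν₁∘γ and ṫ = 2(yẋ − xẏ) on I (an integral curve of 𝕁ν^h = −ν₂X + ν₁Y). Then ν₁∘γ and ν₂∘γ are differentiable with (ν₁∘γ)′ = −(ν₂∘γ)·(H∘γ) and (ν₂∘γ)′ = (ν₁∘γ)·(H∘γ); consequently x and y are C² and the signed curvature of the projection of γ to the plane satisfies ẋÿ − ẏẍ = H∘γ on I. (The horizontal mean curvature at a noncharacteristic point equals the signed curvature of the projection to ℂ of the leaf of the horizontal flow through that point.) -/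

import Mathlib

/-- The Heisenberg horizontal vector field X = ∂/∂x + 2y ∂/∂t acting on a function
of (x,y,t) ∈ ℝ³. -/
noncomputable def Xop (f : ℝ × ℝ × ℝ → ℝ) (p : ℝ × ℝ × ℝ) : ℝ :=
  deriv (fun x => f (x, p.2.1, p.2.2)) p.1
    + 2 * p.2.1 * deriv (fun t => f (p.1, p.2.1, t)) p.2.2

/-- The Heisenberg horizontal vector field Y = ∂/∂y − 2x ∂/∂t acting on a function
of (x,y,t) ∈ ℝ³. -/
noncomputable def Yop (f : ℝ × ℝ × ℝ → ℝ) (p : ℝ × ℝ × ℝ) : ℝ :=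
  deriv (fun y => f (p.1, y, p.2.2)) p.2.1
    - 2 * p.1 * deriv (fun t => f (p.1, p.2.1, t)) p.2.2

private lemma slice_derivs (f : ℝ × ℝ × ℝ → ℝ) (D : ℝ × ℝ × ℝ →L[ℝ] ℝ) (p : ℝ × ℝ × ℝ)
    (hD : HasFDerivAt f D p) :
    deriv (fun u => f (u, p.2.1, p.2.2)) p.1 = D (1, 0, 0) ∧
    deriv (fun u => f (p.1, u, p.2.2)) p.2.1 = D (0, 1, 0) ∧
    deriv (fun u => f (p.1, p.2.1, u)) p.2.2 = D (0, 0, 1) := by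
  refine ⟨?_, ?_, ?_⟩
  · have h : HasDerivAt (fun u : ℝ => (u, p.2.1, p.2.2)) ((1 : ℝ), (0 : ℝ), (0 : ℝ)) p.1 :=
      HasDerivAt.prodMk (hasDerivAt_id _) (HasDerivAt.prodMk (hasDerivAt_const _ _) (hasDerivAt_const _ _))
    exact (hD.comp_hasDerivAt p.1 h).deriv
  · have h : HasDerivAt (fun u : ℝ => (p.1, u, p.2.2)) ((0 : ℝ), (1 : ℝ), (0 : ℝ)) p.2.1 :=
      HasDerivAt.prodMk (hasDerivAt_const _ _) (HasDerivAt.prodMk (hasDerivAt_id _) (hasDerivAt_const _ _))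
    exact (hD.comp_hasDerivAt p.2.1 h).deriv
  · have h : HasDerivAt (fun u : ℝ => (p.1, p.2.1, u)) ((0 : ℝ), (0 : ℝ), (1 : ℝ)) p.2.2 :=
      HasDerivAt.prodMk (hasDerivAt_const _ _) (HasDerivAt.prodMk (hasDerivAt_const _ _) (hasDerivAt_id _))
    exact (hD.comp_hasDerivAt p.2.2 h).deriv

private lemma clm_expand (D : ℝ × ℝ × ℝ →L[ℝ] ℝ) (a b c : ℝ) :
    D (a, b, c) = a * D (1, 0, 0) + b * D (0, 1, 0) + c * D (0, 0, 1) := by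
  have h : (a, b, c) = a • ((1 : ℝ), (0 : ℝ), (0 : ℝ)) + b • ((0:ℝ), (1:ℝ), (0:ℝ))
      + c • ((0:ℝ), (0:ℝ), (1:ℝ)) := by
    simp [Prod.ext_iff]
  rw [h, map_add, map_add, map_smul, map_smul, map_smul, smul_eq_mul, smul_eq_mul, smul_eq_mul]

/-- along an integral curve γ of 𝕁ν^h = −ν₂X + ν₁Y one has
(ν₁∘γ)′ = −(ν₂∘γ)(H∘γ), (ν₂∘γ)′ = (ν₁∘γ)(H∘γ) with H = Xν₁ + Yν₂, and the signed
curvature of the projection of γ to the plane equals H∘γ: ẋÿ − ẏẍ = H∘γ on I. -/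
theorem stmt_6 (Ω : Set (ℝ × ℝ × ℝ)) (hΩ : IsOpen Ω)
    (ν₁ ν₂ : ℝ × ℝ × ℝ → ℝ)
    (hν₁ : ContDiffOn ℝ 1 ν₁ Ω) (hν₂ : ContDiffOn ℝ 1 ν₂ Ω)
    (hunit : ∀ p ∈ Ω, ν₁ p ^ 2 + ν₂ p ^ 2 = 1)
    (I : Set ℝ) (hI : IsOpen I)
    (x y t : ℝ → ℝ)
    (hmem : ∀ s ∈ I, (x s, y s, t s) ∈ Ω)
    (hdx : ∀ s ∈ I, HasDerivAt x (-(ν₂ (x s, y s, t s))) s)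
    (hdy : ∀ s ∈ I, HasDerivAt y (ν₁ (x s, y s, t s)) s)
    (hdt : ∀ s ∈ I, HasDerivAt t
      (2 * (y s * (-(ν₂ (x s, y s, t s))) - x s * ν₁ (x s, y s, t s))) s) :
    ∀ s ∈ I,
      HasDerivAt (fun τ => ν₁ (x τ, y τ, t τ))
        (-(ν₂ (x s, y s, t s))
          * (Xop ν₁ (x s, y s, t s) + Yop ν₂ (x s, y s, t s))) s ∧
      HasDerivAt (fun τ => ν₂ (x τ, y τ, t τ))
        (ν₁ (x s, y s, t s)
          * (Xop ν₁ (x s, y s, t s) + Yop ν₂ (x s, y s, t s))) s ∧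
      deriv x s * deriv (deriv y) s - deriv y s * deriv (deriv x) s
        = Xop ν₁ (x s, y s, t s) + Yop ν₂ (x s, y s, t s) := by
  -- pointwise fderiv data
  have key : ∀ s ∈ I,
      HasDerivAt (fun τ => ν₁ (x τ, y τ, t τ))
        (-(ν₂ (x s, y s, t s)) * (Xop ν₁ (x s, y s, t s) + Yop ν₂ (x s, y s, t s))) s ∧
      HasDerivAt (fun τ => ν₂ (x τ, y τ, t τ))
        (ν₁ (x s, y s, t s) * (Xop ν₁ (x s, y s, t s) + Yop ν₂ (x s, y s, t s))) s := by
    intro s hs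
    set p : ℝ × ℝ × ℝ := (x s, y s, t s) with hp
    have hpΩ : p ∈ Ω := hmem s hs
    have hD1 : HasFDerivAt ν₁ (fderiv ℝ ν₁ p) p :=
      ((hν₁.contDiffAt (hΩ.mem_nhds hpΩ)).differentiableAt one_ne_zero).hasFDerivAt
    have hD2 : HasFDerivAt ν₂ (fderiv ℝ ν₂ p) p :=
      ((hν₂.contDiffAt (hΩ.mem_nhds hpΩ)).differentiableAt one_ne_zero).hasFDerivAt
    set D1 := fderiv ℝ ν₁ p
    set D2 := fderiv ℝ ν₂ p
    -- unit constraint differentiated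
    have hsum : HasFDerivAt (fun q => ν₁ q * ν₁ q + ν₂ q * ν₂ q)
        ((ν₁ p • D1 + ν₁ p • D1) + (ν₂ p • D2 + ν₂ p • D2)) p :=
      (hD1.mul hD1).add (hD2.mul hD2)
    have hconst : HasFDerivAt (fun q : ℝ × ℝ × ℝ => ν₁ q * ν₁ q + ν₂ q * ν₂ q)
        (0 : ℝ × ℝ × ℝ →L[ℝ] ℝ) p := by
      have heq : (fun q : ℝ × ℝ × ℝ => ν₁ q * ν₁ q + ν₂ q * ν₂ q) =ᶠ[nhds p]
          (fun _ => (1 : ℝ)) := by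
        filter_upwards [hΩ.mem_nhds hpΩ] with q hq
        have := hunit q hq
        nlinarith [this]
      exact (hasFDerivAt_const (1 : ℝ) p).congr_of_eventuallyEq heq
    have hzero : (ν₁ p • D1 + ν₁ p • D1) + (ν₂ p • D2 + ν₂ p • D2) =
        (0 : ℝ × ℝ × ℝ →L[ℝ] ℝ) := hsum.unique hconst
    have hv : ∀ v : ℝ × ℝ × ℝ, ν₁ p * D1 v + ν₂ p * D2 v = 0 := by
      intro v
      have := DFunLike.congr_fun hzero v
      simp only [ContinuousLinearMap.add_apply, ContinuousLinearMap.smul_apply,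
        smul_eq_mul, ContinuousLinearMap.zero_apply] at this
      linarith
    have hv1 := hv (1, 0, 0); have hv2 := hv (0, 1, 0); have hv3 := hv (0, 0, 1)
    -- express Xop/Yop via D1, D2
    obtain ⟨hx1, hy1, ht1⟩ := slice_derivs ν₁ D1 p hD1
    obtain ⟨hx2, hy2, ht2⟩ := slice_derivs ν₂ D2 p hD2
    have hXop : Xop ν₁ p = D1 (1, 0, 0) + 2 * y s * D1 (0, 0, 1) := by
      rw [Xop, hx1, ht1]
    have hYop : Yop ν₂ p = D2 (0, 1, 0) - 2 * x s * D2 (0, 0, 1) := by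
      rw [Yop, hy2, ht2]
    -- the curve derivative
    have hγ : HasDerivAt (fun τ => (x τ, y τ, t τ))
        ((-(ν₂ p), ν₁ p, 2 * (y s * (-(ν₂ p)) - x s * ν₁ p))) s :=
      HasDerivAt.prodMk (hdx s hs) (HasDerivAt.prodMk (hdy s hs) (hdt s hs))
    have hc1 : HasDerivAt (fun τ => ν₁ (x τ, y τ, t τ))
        (D1 (-(ν₂ p), ν₁ p, 2 * (y s * (-(ν₂ p)) - x s * ν₁ p))) s :=
      hD1.comp_hasDerivAt s hγ
    have hc2 : HasDerivAt (fun τ => ν₂ (x τ, y τ, t τ))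
        (D2 (-(ν₂ p), ν₁ p, 2 * (y s * (-(ν₂ p)) - x s * ν₁ p))) s :=
      hD2.comp_hasDerivAt s hγ
    constructor
    · convert hc1 using 1
      rw [clm_expand, hXop, hYop]
      linear_combination -hv2 + 2 * x s * hv3
    · convert hc2 using 1
      rw [clm_expand, hXop, hYop]
      linear_combination hv1 + 2 * y s * hv3
  intro s hs
  obtain ⟨h1, h2⟩ := key s hs
  refine ⟨h1, h2, ?_⟩
  set p : ℝ × ℝ × ℝ := (x s, y s, t s) with hp
  have hIs : I ∈ nhds s := hI.mem_nhds hs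
  have hdx' : deriv x s = -(ν₂ p) := (hdx s hs).deriv
  have hdy' : deriv y s = ν₁ p := (hdy s hs).deriv
  have hddy : deriv (deriv y) s
      = -(ν₂ p) * (Xop ν₁ p + Yop ν₂ p) := by
    have heq : deriv y =ᶠ[nhds s] (fun τ => ν₁ (x τ, y τ, t τ)) := by
      filter_upwards [hIs] with τ hτ
      exact (hdy τ hτ).deriv
    rw [heq.deriv_eq]
    exact h1.deriv
  have hddx : deriv (deriv x) s
      = -(ν₁ p * (Xop ν₁ p + Yop ν₂ p)) := by
    have heq : deriv x =ᶠ[nhds s] (fun τ => -(ν₂ (x τ, y τ, t τ))) := by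
      filter_upwards [hIs] with τ hτ
      exact (hdx τ hτ).deriv
    rw [heq.deriv_eq]
    have := ((key s hs).2).neg
    exact this.deriv
  rw [hdx', hdy', hddy, hddx]
  have hu := hunit p (hmem s hs)
  linear_combination (Xop ν₁ p + Yop ν₂ p) * hu
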